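/- arXiv:2012.14702 — 8 statements merged into one kernel-verified Lean document; each statement's English description precedes it below -/
import Mathlib

section
/- Let M = D + Δ where D = diag(ε₁,…,εₙ) has pairwise distinct diagonal entries, fix i, and let z ∈ ℂⁿ with z_i = 1. Then Mz = λz for some λ ∈ ℂ if and only if for all j ≠ i: z_j = (ε_j − ε_i)^{-1} ( z_j (Δz)_i − (Δz)_j ). Equivalently, z is a fixed point of the map f_i(z) = e_i + g_i ∘ (z (Δz)_i − Δz), where g_i is the vector with (g_i)_j = (ε_j − ε_i)^{-1} for j ≠ i and (g_i)_i = 0, and ∘ denotes the componentwise product. -/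
open Matrix

/-- For `M = D + Δ` with `D = diag ε` having pairwise distinct entries and `z i = 1`,
`z` is an eigenvector of `M` iff `z` is a fixed point of the IPT map
`f_i(z) = e_i + g_i ∘ (z (Δz)_i − Δz)`, i.e. iff
`z_j = (ε_j − ε_i)⁻¹ (z_j (Δz)_i − (Δz)_j)` for all `j ≠ i`. -/
theorem eigenvector_iff_IPT_fixed_point {n : ℕ} (ε : Fin n → ℂ)
    (hdist : Function.Injective ε) (Δ : Matrix (Fin n) (Fin n) ℂ)
    (i : Fin n) (z : Fin n → ℂ) (hnorm : z i = 1) :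
    (∃ lam : ℂ, (Matrix.diagonal ε + Δ).mulVec z = lam • z) ↔
      ∀ j : Fin n, j ≠ i →
        z j = (ε j - ε i)⁻¹ * (z j * Δ.mulVec z i - Δ.mulVec z j) := by
  have hmv : ∀ j, (Matrix.diagonal ε + Δ).mulVec z j = ε j * z j + Δ.mulVec z j := by
    intro j
    simp [Matrix.add_mulVec, Matrix.mulVec_diagonal]
  constructor
  · rintro ⟨lam, h⟩ j hj
    have hi := congrFun h i
    have hjj := congrFun h j
    rw [hmv] at hi hjj
    simp only [Pi.smul_apply, smul_eq_mul, hnorm, mul_one] at hi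
    -- hi : ε i + Δ.mulVec z i = lam
    have hne : ε j - ε i ≠ 0 := sub_ne_zero.mpr (fun h' => hj (hdist h'))
    field_simp
    have : ε j * z j + Δ.mulVec z j = (ε i + Δ.mulVec z i) * z j := by
      rw [hi]; exact hjj
    ring_nf
    ring_nf at this
    linear_combination this
  · intro h
    refine ⟨ε i + Δ.mulVec z i, ?_⟩
    funext j
    rw [hmv]
    simp only [Pi.smul_apply, smul_eq_mul]
    by_cases hj : j = i
    · subst hj; rw [hnorm]; ring
    · have hne : ε j - ε i ≠ 0 := sub_ne_zero.mpr (fun h' => hj (hdist h'))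
      have := h j hj
      field_simp at this
      linear_combination this
end

section
/- Let D be diagonal with distinct entries, Δ ∈ ℂ^{n×n}, G the inverse gaps matrix with G_{jk} = (D_{jj} − D_{kk})^{-1} for j ≠ k and G_{jj} = 0, and F(Z) = I + G ∘ (Z·𝒟(ΔZ) − ΔZ), where ∘ is the Hadamard product and 𝒟(X) is the diagonal matrix of the diagonal of X. If ‖G‖ ‖Δ‖ < 3 − 2√2 (spectral norms), then F maps the closed ball B of radius √2 around I (in spectral norm) into itself and is a contraction on B; hence F has a unique fixed point Z* in B, and the iterates Z^{(k)} = F^k(I) converge to Z* at an exponential (geometric) rate. -/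
open Matrix
open scoped Matrix.Norms.L2Operator

section Aux
variable {n : ℕ}

set_option maxHeartbeats 800000 in
lemma l2norm_le_bound (A : Matrix (Fin n) (Fin n) ℂ) {c : ℝ} (hc : 0 ≤ c)
    (h : ∀ u : Fin n → ℂ, ∑ i, ‖(A *ᵥ u) i‖ ^ 2 ≤ c ^ 2 * ∑ j, ‖u j‖ ^ 2) : ‖A‖ ≤ c := by
  rw [Matrix.l2_opNorm_def]
  refine ContinuousLinearMap.opNorm_le_bound _ hc fun x => ?_
  have hx : ‖x‖ = Real.sqrt (∑ j, ‖x j‖ ^ 2) := EuclideanSpace.norm_eq x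
  have happ : (((Matrix.toEuclideanLin ≪≫ₗ LinearMap.toContinuousLinearMap) A) x : EuclideanSpace ℂ (Fin n))
      = Matrix.toEuclideanLin A x := rfl
  rw [happ, Matrix.toEuclideanLin_apply, EuclideanSpace.norm_eq]
  simp only [WithLp.ofLp_toLp]
  calc Real.sqrt (∑ i, ‖(A *ᵥ (WithLp.equiv 2 (Fin n → ℂ)) x) i‖ ^ 2)
      ≤ Real.sqrt (c ^ 2 * ∑ j, ‖((WithLp.equiv 2 (Fin n → ℂ)) x) j‖ ^ 2) := Real.sqrt_le_sqrt (h _)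
    _ = c * Real.sqrt (∑ j, ‖((WithLp.equiv 2 (Fin n → ℂ)) x) j‖ ^ 2) := by
        rw [Real.sqrt_mul (sq_nonneg c), Real.sqrt_sq hc]
    _ = c * ‖x‖ := by rw [hx]; rfl

lemma col_sq_sum_le (B : Matrix (Fin n) (Fin n) ℂ) (j : Fin n) :
    ∑ i, ‖B i j‖ ^ 2 ≤ ‖B‖ ^ 2 := by
  have h := B.l2_opNorm_mulVec (EuclideanSpace.single j (1 : ℂ))
  rw [EuclideanSpace.norm_single, norm_one, mul_one, EuclideanSpace.norm_eq] at h
  have hcoord : ∀ i, ‖((EuclideanSpace.equiv (Fin n) ℂ).symm (B *ᵥ (EuclideanSpace.single j (1:ℂ)))) i‖ ^ 2 = ‖B i j‖ ^ 2 := by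
    intro i
    congr 2
    show (∑ k, B i k * (EuclideanSpace.single j (1:ℂ)) k) = B i j
    simp [EuclideanSpace.single_apply]
  simp_rw [hcoord] at h
  calc ∑ i, ‖B i j‖ ^ 2 = Real.sqrt (∑ i, ‖B i j‖ ^ 2) ^ 2 := by
        rw [Real.sq_sqrt (Finset.sum_nonneg fun i _ => sq_nonneg _)]
    _ ≤ ‖B‖ ^ 2 := by
        have := Real.sqrt_nonneg (∑ i, ‖B i j‖ ^ 2)
        nlinarith [h]

lemma row_sq_sum_le (A : Matrix (Fin n) (Fin n) ℂ) (i : Fin n) :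
    ∑ j, ‖A i j‖ ^ 2 ≤ ‖A‖ ^ 2 := by
  have h := col_sq_sum_le Aᴴ i
  rw [Matrix.l2_opNorm_conjTranspose] at h
  simpa [Matrix.conjTranspose_apply] using h

lemma entry_le_l2norm (X : Matrix (Fin n) (Fin n) ℂ) (i j : Fin n) : ‖X i j‖ ≤ ‖X‖ := by
  have h1 : ‖X i j‖ ^ 2 ≤ ‖X‖ ^ 2 := by
    refine le_trans ?_ (col_sq_sum_le X j)
    exact Finset.single_le_sum (f := fun i => ‖X i j‖ ^ 2) (fun i _ => sq_nonneg _) (Finset.mem_univ i)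
  calc ‖X i j‖ = Real.sqrt (‖X i j‖ ^ 2) := (Real.sqrt_sq (norm_nonneg _)).symm
    _ ≤ Real.sqrt (‖X‖ ^ 2) := Real.sqrt_le_sqrt h1
    _ = ‖X‖ := Real.sqrt_sq (norm_nonneg _)

lemma diag_le_l2norm (X : Matrix (Fin n) (Fin n) ℂ) :
    ‖Matrix.diagonal (fun i => X i i)‖ ≤ ‖X‖ := by
  refine l2norm_le_bound _ (norm_nonneg X) fun u => ?_
  simp_rw [Matrix.mulVec_diagonal]
  rw [Finset.mul_sum]
  refine Finset.sum_le_sum fun i _ => ?_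
  rw [norm_mul, mul_pow]
  have h := entry_le_l2norm X i i
  exact mul_le_mul_of_nonneg_right (by nlinarith [norm_nonneg (X i i), norm_nonneg X]) (sq_nonneg _)

lemma hadamard_l2norm_le (A B : Matrix (Fin n) (Fin n) ℂ) :
    ‖A ⊙ B‖ ≤ ‖A‖ * ‖B‖ := by
  refine l2norm_le_bound _ (mul_nonneg (norm_nonneg A) (norm_nonneg B)) fun u => ?_
  have hmv : ∀ i, (A ⊙ B *ᵥ u) i = ∑ j, A i j * B i j * u j := by
    intro i; simp [Matrix.mulVec, dotProduct, Matrix.hadamard_apply]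
  calc ∑ i, ‖(A ⊙ B *ᵥ u) i‖ ^ 2
      ≤ ∑ i, (∑ j, ‖A i j‖ ^ 2) * (∑ j, (‖B i j‖ * ‖u j‖) ^ 2) := by
        refine Finset.sum_le_sum fun i _ => ?_
        rw [hmv i]
        calc ‖∑ j, A i j * B i j * u j‖ ^ 2
            ≤ (∑ j, ‖A i j‖ * (‖B i j‖ * ‖u j‖)) ^ 2 := by
              have h1 : ‖∑ j, A i j * B i j * u j‖ ≤ ∑ j, ‖A i j‖ * (‖B i j‖ * ‖u j‖) := by
                refine (norm_sum_le _ _).trans (le_of_eq ?_)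
                refine Finset.sum_congr rfl fun j _ => ?_
                rw [norm_mul, norm_mul, mul_assoc]
              exact pow_le_pow_left₀ (norm_nonneg _) h1 2
          _ ≤ _ := Finset.sum_mul_sq_le_sq_mul_sq _ _ _
    _ ≤ ∑ i, ‖A‖ ^ 2 * (∑ j, (‖B i j‖ * ‖u j‖) ^ 2) := by
        refine Finset.sum_le_sum fun i _ => ?_
        refine mul_le_mul_of_nonneg_right (row_sq_sum_le A i) ?_
        exact Finset.sum_nonneg fun j _ => sq_nonneg _
    _ = ‖A‖ ^ 2 * ∑ j, (∑ i, ‖B i j‖ ^ 2) * ‖u j‖ ^ 2 := by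
        rw [← Finset.mul_sum, Finset.sum_comm]
        congr 1
        refine Finset.sum_congr rfl fun j _ => ?_
        rw [Finset.sum_mul]
        exact Finset.sum_congr rfl fun i _ => by ring
    _ ≤ ‖A‖ ^ 2 * ∑ j, ‖B‖ ^ 2 * ‖u j‖ ^ 2 := by
        refine mul_le_mul_of_nonneg_left ?_ (sq_nonneg _)
        exact Finset.sum_le_sum fun j _ =>
          mul_le_mul_of_nonneg_right (col_sq_sum_le B j) (sq_nonneg _)
    _ = (‖A‖ * ‖B‖) ^ 2 * ∑ j, ‖u j‖ ^ 2 := by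
        rw [← Finset.mul_sum]; ring

lemma l2norm_one [NeZero n] : ‖(1 : Matrix (Fin n) (Fin n) ℂ)‖ = 1 := by
  rw [Matrix.cstar_norm_def, _root_.map_one]
  exact norm_one

end Aux

/-- If `‖G‖‖Δ‖ < 3 − 2√2` (spectral norms), the IPT map
`F(Z) = I + G ∘ (Z·𝒟(ΔZ) − ΔZ)` maps the closed spectral-norm ball of radius `√2`
around `I` into itself, is a contraction there, has a unique fixed point `Z*` in
that ball, and the iterates `F^k(I)` converge to `Z*` geometrically. -/
theorem IPT_contraction_convergence {n : ℕ} [NeZero n] (ε : Fin n → ℂ)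
    (hdist : Function.Injective ε) (Δ : Matrix (Fin n) (Fin n) ℂ)
    (G : Matrix (Fin n) (Fin n) ℂ)
    (hG : G = Matrix.of fun j k => if j = k then 0 else (ε j - ε k)⁻¹)
    (F : Matrix (Fin n) (Fin n) ℂ → Matrix (Fin n) (Fin n) ℂ)
    (hF : F = fun Z => 1 + G ⊙ (Z * Matrix.diagonal (fun i => (Δ * Z) i i) - Δ * Z))
    (hsmall : ‖G‖ * ‖Δ‖ < 3 - 2 * Real.sqrt 2) :
    Set.MapsTo F (Metric.closedBall (1 : Matrix (Fin n) (Fin n) ℂ) (Real.sqrt 2))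
        (Metric.closedBall 1 (Real.sqrt 2)) ∧
      (∃ K : NNReal, K < 1 ∧
        LipschitzOnWith K F (Metric.closedBall 1 (Real.sqrt 2))) ∧
      ∃ Zs : Matrix (Fin n) (Fin n) ℂ,
        Zs ∈ Metric.closedBall (1 : Matrix (Fin n) (Fin n) ℂ) (Real.sqrt 2) ∧
        F Zs = Zs ∧
        (∀ W ∈ Metric.closedBall (1 : Matrix (Fin n) (Fin n) ℂ) (Real.sqrt 2),
          F W = W → W = Zs) ∧
        ∃ C r : ℝ, 0 ≤ C ∧ 0 ≤ r ∧ r < 1 ∧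
          ∀ k : ℕ, ‖F^[k] 1 - Zs‖ ≤ C * r ^ k := by
  set s2 : ℝ := Real.sqrt 2 with hs2
  have hs2nn : 0 ≤ s2 := Real.sqrt_nonneg 2
  have hs2sq : s2 ^ 2 = 2 := Real.sq_sqrt (by norm_num)
  set g : ℝ := ‖G‖ * ‖Δ‖ with hg
  have hg0 : 0 ≤ g := mul_nonneg (norm_nonneg _) (norm_nonneg _)
  set S : Set (Matrix (Fin n) (Fin n) ℂ) := Metric.closedBall 1 s2 with hS
  -- norm bound for elements of the ball
  have hball : ∀ Z ∈ S, ‖Z‖ ≤ 1 + s2 := by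
    intro Z hZ
    rw [hS, Metric.mem_closedBall, dist_eq_norm] at hZ
    calc ‖Z‖ = ‖1 + (Z - 1)‖ := by rw [add_sub_cancel]
      _ ≤ ‖(1 : Matrix (Fin n) (Fin n) ℂ)‖ + ‖Z - 1‖ := norm_add_le _ _
      _ ≤ 1 + s2 := by rw [l2norm_one]; linarith
  -- the basic estimate for F Z - F W
  have hDdiag : ∀ Z : Matrix (Fin n) (Fin n) ℂ,
      ‖Matrix.diagonal (fun i => (Δ * Z) i i)‖ ≤ ‖Δ‖ * ‖Z‖ :=
    fun Z => (diag_le_l2norm (Δ * Z)).trans (Matrix.l2_opNorm_mul Δ Z)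
  have hFsub : ∀ Z W : Matrix (Fin n) (Fin n) ℂ,
      F Z - F W = G ⊙ ((Z - W) * Matrix.diagonal (fun i => (Δ * Z) i i)
        + W * Matrix.diagonal (fun i => (Δ * (Z - W)) i i) - Δ * (Z - W)) := by
    intro Z W
    rw [hF]
    have hdd : Matrix.diagonal (fun i => (Δ * (Z - W)) i i)
        = Matrix.diagonal (fun i => (Δ * Z) i i) - Matrix.diagonal (fun i => (Δ * W) i i) := by
      rw [Matrix.diagonal_sub]
      congr 1
      funext i
      simp [mul_sub, Matrix.sub_apply]
    have hhad : ∀ X Y : Matrix (Fin n) (Fin n) ℂ, G ⊙ X - G ⊙ Y = G ⊙ (X - Y) := by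
      intro X Y
      ext i j
      simp [Matrix.hadamard_apply, Matrix.sub_apply, mul_sub]
    simp only []
    rw [add_sub_add_left_eq_sub, hhad, hdd]
    congr 1
    noncomm_ring
  have hlip : ∀ Z ∈ S, ∀ W ∈ S, ‖F Z - F W‖ ≤ g * (3 + 2 * s2) * ‖Z - W‖ := by
    intro Z hZ W hW
    have hZn := hball Z hZ
    have hWn := hball W hW
    rw [hFsub]
    refine (hadamard_l2norm_le _ _).trans ?_
    have h1 : ‖(Z - W) * Matrix.diagonal (fun i => (Δ * Z) i i)
        + W * Matrix.diagonal (fun i => (Δ * (Z - W)) i i) - Δ * (Z - W)‖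
        ≤ ‖Z - W‖ * (‖Δ‖ * ‖Z‖) + ‖W‖ * (‖Δ‖ * ‖Z - W‖) + ‖Δ‖ * ‖Z - W‖ := by
      refine (norm_sub_le _ _).trans ?_
      gcongr
      · refine (norm_add_le _ _).trans ?_
        gcongr
        · exact (Matrix.l2_opNorm_mul _ _).trans
            (mul_le_mul_of_nonneg_left (hDdiag Z) (norm_nonneg _))
        · exact (Matrix.l2_opNorm_mul _ _).trans
            (mul_le_mul_of_nonneg_left (hDdiag (Z - W)) (norm_nonneg _))
      · exact Matrix.l2_opNorm_mul _ _
    refine (mul_le_mul_of_nonneg_left h1 (norm_nonneg G)).trans ?_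
    have hd0 : (0:ℝ) ≤ ‖Δ‖ := norm_nonneg _
    have hzw0 : (0:ℝ) ≤ ‖Z - W‖ := norm_nonneg _
    have hG0 : (0:ℝ) ≤ ‖G‖ := norm_nonneg _
    have hZ0 : (0:ℝ) ≤ ‖Z‖ := norm_nonneg _
    have hW0 : (0:ℝ) ≤ ‖W‖ := norm_nonneg _
    have heq : ‖G‖ * (‖Z - W‖ * (‖Δ‖ * ‖Z‖) + ‖W‖ * (‖Δ‖ * ‖Z - W‖) + ‖Δ‖ * ‖Z - W‖)
        = g * ((‖Z‖ + ‖W‖ + 1) * ‖Z - W‖) := by rw [hg]; ring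
    rw [heq]
    calc g * ((‖Z‖ + ‖W‖ + 1) * ‖Z - W‖)
        ≤ g * ((3 + 2 * s2) * ‖Z - W‖) := by
          refine mul_le_mul_of_nonneg_left ?_ hg0
          exact mul_le_mul_of_nonneg_right (by linarith) hzw0
      _ = g * (3 + 2 * s2) * ‖Z - W‖ := by ring
  -- MapsTo
  have hmaps : Set.MapsTo F S S := by
    intro Z hZ
    have hZn := hball Z hZ
    rw [hS, Metric.mem_closedBall, dist_eq_norm]
    have h0 : F Z - 1 = G ⊙ (Z * Matrix.diagonal (fun i => (Δ * Z) i i) - Δ * Z) := by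
      rw [hF]; exact add_sub_cancel_left _ _
    rw [h0]
    refine (hadamard_l2norm_le _ _).trans ?_
    have h1 : ‖Z * Matrix.diagonal (fun i => (Δ * Z) i i) - Δ * Z‖
        ≤ ‖Z‖ * (‖Δ‖ * ‖Z‖) + ‖Δ‖ * ‖Z‖ := by
      refine (norm_sub_le _ _).trans ?_
      gcongr
      · exact (Matrix.l2_opNorm_mul _ _).trans
          (mul_le_mul_of_nonneg_left (hDdiag Z) (norm_nonneg _))
      · exact Matrix.l2_opNorm_mul _ _
    refine (mul_le_mul_of_nonneg_left h1 (norm_nonneg G)).trans ?_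
    have hd0 : (0:ℝ) ≤ ‖Δ‖ := norm_nonneg _
    have hG0 : (0:ℝ) ≤ ‖G‖ := norm_nonneg _
    have hZ0 : (0:ℝ) ≤ ‖Z‖ := norm_nonneg _
    nlinarith [mul_le_mul_of_nonneg_left hZn hd0, sq_nonneg (‖Z‖ - (1 + s2)),
      mul_le_mul_of_nonneg_left (mul_le_mul_of_nonneg_left hZn hd0) hG0,
      mul_le_mul hZn hZn hZ0 (by linarith : (0:ℝ) ≤ 1 + s2)]
  -- the Lipschitz constant
  set Kr : ℝ := g * (3 + 2 * s2) with hKr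
  have hKr0 : 0 ≤ Kr := mul_nonneg hg0 (by linarith)
  have hKr1 : Kr < 1 := by nlinarith
  set K : NNReal := Real.toNNReal Kr with hK
  have hKco : (K : ℝ) = Kr := Real.coe_toNNReal _ hKr0
  have hK1 : K < 1 := by
    rw [← NNReal.coe_lt_coe, hKco]; exact_mod_cast hKr1
  have hLip : LipschitzOnWith K F S := by
    refine LipschitzOnWith.of_dist_le_mul fun Z hZ W hW => ?_
    rw [dist_eq_norm, dist_eq_norm, hKco]
    exact hlip Z hZ W hW
  refine ⟨hmaps, ⟨K, hK1, hLip⟩, ?_⟩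
  -- fixed point
  haveI : CompleteSpace (Matrix (Fin n) (Fin n) ℂ) := FiniteDimensional.complete ℂ _
  have hsc : IsComplete S := Metric.isClosed_closedBall.isComplete
  have h1mem : (1 : Matrix (Fin n) (Fin n) ℂ) ∈ S := Metric.mem_closedBall_self hs2nn
  have hcontr : ContractingWith K (hmaps.restrict F S S) :=
    ⟨hK1, hLip.mapsToRestrict hmaps⟩
  obtain ⟨Zs, hZsmem, hZsfix, -, -⟩ :=
    hcontr.exists_fixedPoint' hsc hmaps h1mem (edist_ne_top _ _)
  have hFZs : F Zs = Zs := hZsfix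
  refine ⟨Zs, hZsmem, hFZs, ?_, ?_⟩
  · -- uniqueness
    intro W hW hFW
    have hd : dist W Zs ≤ Kr * dist W Zs := by
      calc dist W Zs = dist (F W) (F Zs) := by rw [hFW, hFZs]
        _ = ‖F W - F Zs‖ := dist_eq_norm _ _
        _ ≤ Kr * ‖W - Zs‖ := hlip W hW Zs hZsmem
        _ = Kr * dist W Zs := by rw [dist_eq_norm]
    have := dist_nonneg (x := W) (y := Zs)
    have hdz : dist W Zs = 0 := by nlinarith
    exact dist_eq_zero.mp hdz
  · -- geometric convergence
    refine ⟨dist 1 Zs, Kr, dist_nonneg, hKr0, hKr1, ?_⟩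
    have hiter : ∀ k : ℕ, F^[k] 1 ∈ S := by
      intro k
      induction k with
      | zero => simpa using h1mem
      | succ k ih => rw [Function.iterate_succ_apply']; exact hmaps ih
    intro k
    induction k with
    | zero => rw [Function.iterate_zero_apply, pow_zero, mul_one, ← dist_eq_norm]
    | succ k ih =>
      rw [Function.iterate_succ_apply', ← dist_eq_norm]
      calc dist (F (F^[k] 1)) Zs = dist (F (F^[k] 1)) (F Zs) := by rw [hFZs]
        _ = ‖F (F^[k] 1) - F Zs‖ := dist_eq_norm _ _
        _ ≤ Kr * ‖F^[k] 1 - Zs‖ := hlip _ (hiter k) _ hZsmem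
        _ ≤ Kr * (dist 1 Zs * Kr ^ k) := by
            refine mul_le_mul_of_nonneg_left ?_ hKr0
            rwa [← dist_eq_norm] at ih ⊢
        _ = dist 1 Zs * Kr ^ (k + 1) := by ring
end

section
/- With F as above, for any matrices Z, Z′ one has ‖F(Z) − F(Z′)‖ ≤ ‖G‖‖Δ‖ (1 + ‖Z + Z′‖) ‖Z − Z′‖. -/
open Matrix
open scoped Matrix.Norms.L2Operator

namespace IPTAux

variable {n : ℕ}

/-- Criterion for bounding the `L2` operator norm via the action on vectors. -/
lemma norm_le_of_mulVec (A : Matrix (Fin n) (Fin n) ℂ) {c : ℝ} (hc : 0 ≤ c)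
    (h : ∀ x : EuclideanSpace ℂ (Fin n),
      ‖(EuclideanSpace.equiv (Fin n) ℂ).symm (A *ᵥ x)‖ ≤ c * ‖x‖) : ‖A‖ ≤ c := by
  rw [Matrix.l2_opNorm_def]
  exact ContinuousLinearMap.opNorm_le_bound _ hc h

lemma eucl_apply_le (v : EuclideanSpace ℂ (Fin n)) (i : Fin n) : ‖v i‖ ≤ ‖v‖ := by
  rw [EuclideanSpace.norm_eq]
  refine (Real.le_sqrt (norm_nonneg _)
      (Finset.sum_nonneg fun j _ => sq_nonneg _)).mpr ?_
  exact Finset.single_le_sum (f := fun j => ‖v j‖ ^ 2) (fun j _ => sq_nonneg _)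
    (Finset.mem_univ i)

/-- every entry is bounded by the operator norm -/
lemma entry_le (A : Matrix (Fin n) (Fin n) ℂ) (i j : Fin n) : ‖A i j‖ ≤ ‖A‖ := by
  have h := Matrix.l2_opNorm_mulVec A (EuclideanSpace.single j (1 : ℂ))
  rw [EuclideanSpace.norm_single, norm_one, mul_one] at h
  have hentry : (A *ᵥ (EuclideanSpace.single j (1 : ℂ))) i = A i j := by
    simp [Matrix.mulVec, dotProduct, EuclideanSpace.single_apply,
      Finset.sum_ite_eq', Finset.mem_univ]
  refine le_trans ?_ h
  rw [← hentry]
  exact eucl_apply_le (v := (EuclideanSpace.equiv (Fin n) ℂ).symm _) i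

/-- rows have Frobenius bound by operator norm -/
lemma row_sq_le (A : Matrix (Fin n) (Fin n) ℂ) (i : Fin n) :
    ∑ j, ‖A i j‖ ^ 2 ≤ ‖A‖ ^ 2 := by
  have h := Matrix.l2_opNorm_mulVec Aᴴ (EuclideanSpace.single i (1 : ℂ))
  rw [EuclideanSpace.norm_single, norm_one, mul_one, Matrix.l2_opNorm_conjTranspose] at h
  have hv : ∀ j, (Aᴴ *ᵥ (EuclideanSpace.single i (1 : ℂ))) j = star (A i j) := by
    intro j
    simp [Matrix.mulVec, dotProduct, EuclideanSpace.single_apply,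
      Matrix.conjTranspose_apply, Finset.sum_ite_eq', Finset.mem_univ]
  have hn : ‖(EuclideanSpace.equiv (Fin n) ℂ).symm (Aᴴ *ᵥ (EuclideanSpace.single i (1 : ℂ)))‖
      = Real.sqrt (∑ j, ‖A i j‖ ^ 2) := by
    have h0 : ‖(EuclideanSpace.equiv (Fin n) ℂ).symm (Aᴴ *ᵥ (EuclideanSpace.single i (1 : ℂ)))‖
        = Real.sqrt (∑ j, ‖(Aᴴ *ᵥ (EuclideanSpace.single i (1 : ℂ))) j‖ ^ 2) :=
      EuclideanSpace.norm_eq _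
    rw [h0]
    congr 1
    refine Finset.sum_congr rfl fun j _ => ?_
    rw [hv j, norm_star]
  rw [hn] at h
  calc ∑ j, ‖A i j‖ ^ 2 = Real.sqrt (∑ j, ‖A i j‖ ^ 2) ^ 2 := by
        rw [Real.sq_sqrt (Finset.sum_nonneg fun j _ => sq_nonneg _)]
    _ ≤ ‖A‖ ^ 2 := by
        have := Real.sqrt_nonneg (∑ j, ‖A i j‖ ^ 2)
        nlinarith

/-- columns have Frobenius bound by operator norm -/
lemma col_sq_le (A : Matrix (Fin n) (Fin n) ℂ) (j : Fin n) :
    ∑ i, ‖A i j‖ ^ 2 ≤ ‖A‖ ^ 2 := by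
  have h := row_sq_le Aᴴ j
  rw [Matrix.l2_opNorm_conjTranspose] at h
  simpa [Matrix.conjTranspose_apply] using h

/-- **Schur**: the spectral norm is submultiplicative for the Hadamard product. -/
lemma hadamard_norm_le (A B : Matrix (Fin n) (Fin n) ℂ) : ‖A ⊙ B‖ ≤ ‖A‖ * ‖B‖ := by
  refine norm_le_of_mulVec _ (mul_nonneg (norm_nonneg _) (norm_nonneg _)) fun x => ?_
  set y : Fin n → ℂ := (A ⊙ B) *ᵥ x with hy
  have key : ∀ i, ‖y i‖ ^ 2 ≤ ‖A‖ ^ 2 * ∑ j, (‖B i j‖ * ‖x j‖) ^ 2 := by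
    intro i
    have h1 : ‖y i‖ ≤ ∑ j, ‖A i j‖ * (‖B i j‖ * ‖x j‖) := by
      have hyi : y i = ∑ j, A i j * B i j * x j := by
        simp [hy, Matrix.mulVec, dotProduct, Matrix.hadamard_apply]
      rw [hyi]
      refine le_trans (norm_sum_le _ _) (Finset.sum_le_sum fun j _ => ?_)
      rw [norm_mul, norm_mul, mul_assoc]
    have h2 : (∑ j, ‖A i j‖ * (‖B i j‖ * ‖x j‖)) ^ 2
        ≤ (∑ j, ‖A i j‖ ^ 2) * ∑ j, (‖B i j‖ * ‖x j‖) ^ 2 :=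
      Finset.sum_mul_sq_le_sq_mul_sq _ _ _
    have h3 : (∑ j, ‖A i j‖ ^ 2) * ∑ j, (‖B i j‖ * ‖x j‖) ^ 2
        ≤ ‖A‖ ^ 2 * ∑ j, (‖B i j‖ * ‖x j‖) ^ 2 := by
      refine mul_le_mul_of_nonneg_right (row_sq_le A i)
        (Finset.sum_nonneg fun j _ => sq_nonneg _)
    have h0 : (0:ℝ) ≤ ∑ j, ‖A i j‖ * (‖B i j‖ * ‖x j‖) :=
      Finset.sum_nonneg fun j _ => by positivity
    nlinarith [norm_nonneg (y i)]
  have hsum : ∑ i, ‖y i‖ ^ 2 ≤ ‖A‖ ^ 2 * ‖B‖ ^ 2 * ∑ j, ‖x j‖ ^ 2 := by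
    calc ∑ i, ‖y i‖ ^ 2 ≤ ∑ i, ‖A‖ ^ 2 * ∑ j, (‖B i j‖ * ‖x j‖) ^ 2 :=
          Finset.sum_le_sum fun i _ => key i
      _ = ‖A‖ ^ 2 * ∑ j, (∑ i, ‖B i j‖ ^ 2) * ‖x j‖ ^ 2 := by
          rw [← Finset.mul_sum, Finset.sum_comm]
          congr 1
          refine Finset.sum_congr rfl fun j _ => ?_
          rw [Finset.sum_mul]
          exact Finset.sum_congr rfl fun i _ => by ring
      _ ≤ ‖A‖ ^ 2 * ∑ j, ‖B‖ ^ 2 * ‖x j‖ ^ 2 := by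
          refine mul_le_mul_of_nonneg_left (Finset.sum_le_sum fun j _ => ?_) (sq_nonneg _)
          exact mul_le_mul_of_nonneg_right (col_sq_le B j) (sq_nonneg _)
      _ = ‖A‖ ^ 2 * ‖B‖ ^ 2 * ∑ j, ‖x j‖ ^ 2 := by
          rw [← Finset.mul_sum, mul_assoc]
  have hYnorm : ‖(EuclideanSpace.equiv (Fin n) ℂ).symm y‖ = Real.sqrt (∑ i, ‖y i‖ ^ 2) :=
    EuclideanSpace.norm_eq _
  have hxnorm : ‖x‖ = Real.sqrt (∑ j, ‖x j‖ ^ 2) := EuclideanSpace.norm_eq _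
  rw [hYnorm, hxnorm]
  calc Real.sqrt (∑ i, ‖y i‖ ^ 2) ≤ Real.sqrt (‖A‖ ^ 2 * ‖B‖ ^ 2 * ∑ j, ‖x j‖ ^ 2) :=
        Real.sqrt_le_sqrt hsum
    _ = ‖A‖ * ‖B‖ * Real.sqrt (∑ j, ‖x j‖ ^ 2) := by
        rw [Real.sqrt_mul (by positivity), Real.sqrt_mul (sq_nonneg _),
          Real.sqrt_sq (norm_nonneg _), Real.sqrt_sq (norm_nonneg _), mul_assoc]

lemma norm_one_le : ‖(1 : Matrix (Fin n) (Fin n) ℂ)‖ ≤ 1 := by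
  refine norm_le_of_mulVec _ zero_le_one fun x => ?_
  rw [Matrix.one_mulVec, one_mul]
  exact le_of_eq rfl

/-- the diagonal part is bounded by the operator norm -/
lemma diag_norm_le (X : Matrix (Fin n) (Fin n) ℂ) :
    ‖Matrix.diagonal (fun i => X i i)‖ ≤ ‖X‖ := by
  rw [show Matrix.diagonal (fun i => X i i) = Matrix.diagonal (Matrix.diag X) from rfl,
    ← Matrix.one_hadamard]
  calc ‖(1 : Matrix (Fin n) (Fin n) ℂ) ⊙ X‖ ≤ ‖(1 : Matrix (Fin n) (Fin n) ℂ)‖ * ‖X‖ :=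
        hadamard_norm_le _ _
    _ ≤ 1 * ‖X‖ := mul_le_mul_of_nonneg_right norm_one_le (norm_nonneg _)
    _ = ‖X‖ := one_mul _

end IPTAux

/-- `‖F(Z) − F(Z′)‖ ≤ ‖G‖‖Δ‖(1 + ‖Z + Z′‖)‖Z − Z′‖` for the IPT map
`F(Z) = I + G ∘ (Z·𝒟(ΔZ) − ΔZ)` in the spectral norm. -/
theorem IPT_map_lipschitz_estimate {n : ℕ} (G Δ Z Z' : Matrix (Fin n) (Fin n) ℂ) :
    ‖(1 + G ⊙ (Z * Matrix.diagonal (fun i => (Δ * Z) i i) - Δ * Z)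
        : Matrix (Fin n) (Fin n) ℂ) -
      (1 + G ⊙ (Z' * Matrix.diagonal (fun i => (Δ * Z') i i) - Δ * Z'))‖ ≤
      ‖G‖ * ‖Δ‖ * (1 + ‖Z + Z'‖) * ‖Z - Z'‖ := by
  have key : (1 + G ⊙ (Z * Matrix.diagonal (fun i => (Δ * Z) i i) - Δ * Z)
        : Matrix (Fin n) (Fin n) ℂ) -
      (1 + G ⊙ (Z' * Matrix.diagonal (fun i => (Δ * Z') i i) - Δ * Z')) =
      G ⊙ ((2⁻¹ : ℂ) • ((Z + Z') * Matrix.diagonal (fun i => (Δ * (Z - Z')) i i)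
          + (Z - Z') * Matrix.diagonal (fun i => (Δ * (Z + Z')) i i)) - Δ * (Z - Z')) := by
    ext i j
    simp only [Matrix.add_apply, Matrix.sub_apply, Matrix.hadamard_apply, Matrix.smul_apply,
      Matrix.mul_diagonal, Matrix.mul_sub, Matrix.mul_add, smul_eq_mul]
    ring
  rw [key]
  have hΔD : ‖Δ * (Z - Z')‖ ≤ ‖Δ‖ * ‖Z - Z'‖ := Matrix.l2_opNorm_mul _ _
  have h1 : ‖(Z + Z') * Matrix.diagonal (fun i => (Δ * (Z - Z')) i i)‖
      ≤ ‖Z + Z'‖ * (‖Δ‖ * ‖Z - Z'‖) :=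
    le_trans (Matrix.l2_opNorm_mul _ _)
      (mul_le_mul_of_nonneg_left (le_trans (IPTAux.diag_norm_le _) hΔD) (norm_nonneg _))
  have h2 : ‖(Z - Z') * Matrix.diagonal (fun i => (Δ * (Z + Z')) i i)‖
      ≤ ‖Z - Z'‖ * (‖Δ‖ * ‖Z + Z'‖) :=
    le_trans (Matrix.l2_opNorm_mul _ _)
      (mul_le_mul_of_nonneg_left
        (le_trans (IPTAux.diag_norm_le _) (Matrix.l2_opNorm_mul _ _)) (norm_nonneg _))
  have hsmul : ‖(2⁻¹ : ℂ) • ((Z + Z') * Matrix.diagonal (fun i => (Δ * (Z - Z')) i i)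
      + (Z - Z') * Matrix.diagonal (fun i => (Δ * (Z + Z')) i i))‖
      ≤ 2⁻¹ * (‖Z + Z'‖ * (‖Δ‖ * ‖Z - Z'‖) + ‖Z - Z'‖ * (‖Δ‖ * ‖Z + Z'‖)) := by
    rw [norm_smul]
    have : ‖(2⁻¹ : ℂ)‖ = 2⁻¹ := by
      rw [show ((2⁻¹ : ℂ)) = ((2⁻¹ : ℝ) : ℂ) by norm_num, Complex.norm_real]
      norm_num
    rw [this]
    exact mul_le_mul_of_nonneg_left (le_trans (norm_add_le _ _) (add_le_add h1 h2))
      (by norm_num)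
  have hM : ‖(2⁻¹ : ℂ) • ((Z + Z') * Matrix.diagonal (fun i => (Δ * (Z - Z')) i i)
      + (Z - Z') * Matrix.diagonal (fun i => (Δ * (Z + Z')) i i)) - Δ * (Z - Z')‖
      ≤ ‖Δ‖ * ‖Z + Z'‖ * ‖Z - Z'‖ + ‖Δ‖ * ‖Z - Z'‖ := by
    refine le_trans (norm_sub_le _ _) ?_
    have := hΔD
    nlinarith [hsmul]
  calc ‖G ⊙ ((2⁻¹ : ℂ) • ((Z + Z') * Matrix.diagonal (fun i => (Δ * (Z - Z')) i i)
          + (Z - Z') * Matrix.diagonal (fun i => (Δ * (Z + Z')) i i)) - Δ * (Z - Z'))‖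
      ≤ ‖G‖ * ‖(2⁻¹ : ℂ) • ((Z + Z') * Matrix.diagonal (fun i => (Δ * (Z - Z')) i i)
          + (Z - Z') * Matrix.diagonal (fun i => (Δ * (Z + Z')) i i)) - Δ * (Z - Z')‖ :=
        IPTAux.hadamard_norm_le _ _
    _ ≤ ‖G‖ * (‖Δ‖ * ‖Z + Z'‖ * ‖Z - Z'‖ + ‖Δ‖ * ‖Z - Z'‖) :=
        mul_le_mul_of_nonneg_left hM (norm_nonneg _)
    _ = ‖G‖ * ‖Δ‖ * (1 + ‖Z + Z'‖) * ‖Z - Z'‖ := by ring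
end

section
/- For M(ε) = [[0, ε],[ε, 1]] with partition D = diag(0,1), Δ = [[0,1],[1,0]] scaled by ε, the IPT iterates satisfy Z^{(k)} = [[1, −f^k(0)],[f^k(0), 1]], where f(x) = ε(x² − 1) and f^k denotes the k-fold iterate of f. -/
open Matrix

/-- For the 2×2 example `D = diag(0,1)`, `Δ = ε·[[0,1],[1,0]]`, `G = [[0,−1],[1,0]]`,
the IPT iterates satisfy `Z^(k) = [[1, −f^k(0)],[f^k(0), 1]]` with `f(x) = ε(x² − 1)`. -/
theorem two_by_two_IPT_reduces_to_quadratic_map (ε : ℂ)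
    (F : Matrix (Fin 2) (Fin 2) ℂ → Matrix (Fin 2) (Fin 2) ℂ)
    (hF : F = fun Z =>
      1 + (!![0, -1; 1, 0] : Matrix (Fin 2) (Fin 2) ℂ) ⊙
        (Z * Matrix.diagonal (fun i => ((!![0, ε; ε, 0] : Matrix (Fin 2) (Fin 2) ℂ) * Z) i i)
          - !![0, ε; ε, 0] * Z))
    (f : ℂ → ℂ) (hf : f = fun x => ε * (x ^ 2 - 1)) :
    ∀ k : ℕ, F^[k] 1 = !![1, -(f^[k] 0); f^[k] 0, 1] := by
  intro k
  induction k with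
  | zero =>
    ext i j
    fin_cases i <;> fin_cases j <;> simp [Matrix.one_apply]
  | succ n ih =>
    rw [Function.iterate_succ_apply', ih, Function.iterate_succ_apply', hF, hf]
    ext i j
    fin_cases i <;> fin_cases j <;>
      simp [Matrix.mul_apply, Matrix.add_apply, Matrix.sub_apply, Matrix.hadamard,
        Matrix.one_apply, Fin.sum_univ_two, Matrix.diagonal_apply, Matrix.vecHead, Matrix.vecTail, Matrix.vecMul_diagonal] <;> ring
end

section
/- For real ε with |ε| < √3/2, the iterates f^k(0) of f(x) = ε(x² − 1) converge to the fixed point x*_− = (1 − √(1+4ε²))/(2ε), and moreover |f^k(0) − x*_−| = O(|1 − √(1+4ε²)|^k). -/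
open Filter

/-- Negation conjugacy: the critical orbit of `ε(x²-1)` is the negation of the
critical orbit of `(-ε)(x²-1)`. -/
lemma quadratic_neg_orbit (ε : ℝ) (k : ℕ) :
    (fun x => ε * (x ^ 2 - 1))^[k] 0 = -((fun x => (-ε) * (x ^ 2 - 1))^[k] 0) := by
  induction k with
  | zero => simp
  | succ k ih =>
    rw [Function.iterate_succ_apply', Function.iterate_succ_apply', ih]
    ring

/-- AM-GM-type bound used for the two-step contraction. -/
lemma quadratic_amgm {A B r : ℝ} (hA : 0 ≤ A) (hB : 0 ≤ B) (h : A + B ≤ 2 * r) :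
    A * B ≤ r ^ 2 := by
  nlinarith [sq_nonneg (A - B), sq_nonneg (A + B - 2 * r), mul_nonneg hA hB]

set_option maxHeartbeats 2000000 in
/-- Main quantitative lemma, for positive `ε`. -/
lemma quadratic_orbit_aux_pos (ε : ℝ) (hε : 0 < ε) (h34 : ε ^ 2 < 3 / 4) :
    ∃ C : ℝ, ∀ k : ℕ,
      |(fun x => ε * (x ^ 2 - 1))^[k] 0 - (1 - Real.sqrt (1 + 4 * ε ^ 2)) / (2 * ε)|
        ≤ C * (Real.sqrt (1 + 4 * ε ^ 2) - 1) ^ k := by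
  have main : ∀ x : ℕ → ℝ, x 0 = 0 → (∀ k, x (k + 1) = ε * ((x k) ^ 2 - 1)) →
      ∃ C : ℝ, ∀ k : ℕ,
        |x k - (1 - Real.sqrt (1 + 4 * ε ^ 2)) / (2 * ε)|
          ≤ C * (Real.sqrt (1 + 4 * ε ^ 2) - 1) ^ k := by
    intro x hx0 hxsucc
    set s : ℝ := Real.sqrt (1 + 4 * ε ^ 2) with hs
    have hs2 : s ^ 2 = 1 + 4 * ε ^ 2 := Real.sq_sqrt (by positivity)
    have hsnn : 0 ≤ s := Real.sqrt_nonneg _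
    clear_value s
    have hs1 : 1 < s := by nlinarith only [hs2, hsnn, mul_pos hε hε]
    have hslt2 : s < 2 := by nlinarith only [hs2, hsnn, h34]
    set μ : ℝ := s - 1 with hμ
    clear_value μ
    have hμ0 : 0 < μ := by rw [hμ]; linarith
    have hμ1 : μ < 1 := by rw [hμ]; linarith
    have hμε : μ ^ 2 + 2 * μ = 4 * ε ^ 2 := by rw [hμ]; linear_combination hs2
    set xs : ℝ := (1 - s) / (2 * ε) with hxs
    clear_value xs
    have hxsval : xs = -(μ / (2 * ε)) := by rw [hxs, hμ]; ring
    have hxsneg : xs < 0 := by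
      rw [hxsval]
      have : 0 < μ / (2 * ε) := by positivity
      linarith
    have hfix : ε * (xs ^ 2 - 1) = xs := by
      rw [hxs]; field_simp; linear_combination hs2
    have hε2lt1 : ε ^ 2 < 1 := by linarith
    -- the orbit stays in [-ε, 0]
    have hinv : ∀ k, -ε ≤ x k ∧ x k ≤ 0 := by
      intro k
      induction k with
      | zero => rw [hx0]; constructor <;> linarith
      | succ k ih =>
        obtain ⟨h1, h2⟩ := ih
        rw [hxsucc]
        have hq : (x k) ^ 2 ≤ ε ^ 2 := sq_le_sq' h1 (by linarith only [h2, hε])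
        have hnn : (0:ℝ) ≤ ε * (x k) ^ 2 := mul_nonneg hε.le (sq_nonneg _)
        have hone : (0:ℝ) ≤ ε * (1 - (x k) ^ 2) :=
          mul_nonneg hε.le (by linarith only [hq, hε2lt1])
        constructor
        · linarith only [hnn, hε]
        · linarith only [hone]
    -- exact recurrence
    have hrec : ∀ k, x (k + 1) - xs = ε * (x k + xs) * (x k - xs) := by
      intro k
      rw [hxsucc]
      linear_combination hfix
    -- one-step factorization (all contraction factors are nonnegative)
    have hfactor : ∀ k, |x (k + 1) - xs| = (ε * (-x k - xs)) * |x k - xs| := by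
      intro k
      rw [hrec, abs_mul]
      congr 1
      have hneg : x k + xs < 0 := by
        have := (hinv k).2; linarith
      rw [abs_of_neg (mul_neg_of_pos_of_neg hε hneg)]
      ring
    set ρ : ℝ := (μ ^ 2 + 6 * μ + 1) / 8 with hρ
    clear_value ρ
    have hρ0 : 0 < ρ := by rw [hρ]; positivity
    have hρ1 : ρ < 1 := by rw [hρ]; nlinarith only [hμ0, hμ1]
    have hρμ : μ / 2 ≤ ρ := by rw [hρ]; linarith only [sq_nonneg (μ + 1)]
    -- two-step contraction by ρ²
    have htwostep : ∀ k, |x (k + 2) - xs| ≤ ρ ^ 2 * |x k - xs| := by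
      intro k
      obtain ⟨hk1, hk2⟩ := hinv k
      have hxk1 : x (k + 1) = ε * ((x k) ^ 2 - 1) := hxsucc k
      have h1 := hfactor k
      have h2 := hfactor (k + 1)
      have e : k + 1 + 1 = k + 2 := rfl
      rw [e] at h2
      rw [h2, h1, ← mul_assoc]
      apply mul_le_mul_of_nonneg_right _ (abs_nonneg _)
      have hc : ε * (-x k - xs) = ε * (-x k) + μ / 2 := by
        rw [hxsval]; field_simp; ring
      have hc' : ε * (-x (k + 1) - xs) = ε ^ 2 * (1 - (x k) ^ 2) + μ / 2 := by
        rw [hxk1, hxsval]; field_simp; ring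
      rw [hc, hc']
      have hxk2 : (x k) ^ 2 ≤ ε ^ 2 := sq_le_sq' hk1 (by linarith)
      have hp1 : (0:ℝ) ≤ ε ^ 2 * (ε ^ 2 - (x k) ^ 2) :=
        mul_nonneg (sq_nonneg ε) (by linarith)
      have hp2 : (0:ℝ) ≤ ε ^ 2 * (1 - ε ^ 2) :=
        mul_nonneg (sq_nonneg ε) (by linarith)
      have hp3 : (0:ℝ) ≤ ε * (-x k) := mul_nonneg hε.le (by linarith)
      have hsum : (ε ^ 2 * (1 - (x k) ^ 2) + μ / 2) + (ε * (-x k) + μ / 2) ≤ 2 * ρ := by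
        rw [hρ]
        linarith only [sq_nonneg (ε * x k + 1 / 2), hμε]
      have ha : 0 ≤ ε ^ 2 * (1 - (x k) ^ 2) + μ / 2 := by linarith only [hp1, hp2, hμ0]
      have hb : 0 ≤ ε * (-x k) + μ / 2 := by linarith only [hp3, hμ0]
      exact quadratic_amgm ha hb hsum
    -- distance of the starting point
    set d0 : ℝ := μ / (2 * ε) with hd0
    clear_value d0
    have hd00 : 0 < d0 := by rw [hd0]; positivity
    have hdx0 : |x 0 - xs| = d0 := by
      rw [hx0, hxsval, hd0]
      simp only [zero_sub, neg_neg]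
      exact abs_of_pos (by positivity)
    -- Stage 1: crude geometric decay at rate ρ
    have hstage1 : ∀ k, |x k - xs| ≤ d0 * ρ ^ k ∧ |x (k + 1) - xs| ≤ d0 * ρ ^ (k + 1) := by
      intro k
      induction k with
      | zero =>
        refine ⟨by rw [hdx0]; simp, ?_⟩
        rw [hfactor 0, hdx0, hx0]
        have h00 : ε * (-(0 : ℝ) - xs) = μ / 2 := by rw [hxsval, hd0]; field_simp; ring
        rw [h00]
        have hr : d0 * ρ ^ (0 + 1) = ρ * d0 := by ring
        rw [hr]
        exact mul_le_mul_of_nonneg_right hρμ hd00.le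
      | succ k ih =>
        refine ⟨ih.2, ?_⟩
        show |x (k + 2) - xs| ≤ d0 * ρ ^ (k + 2)
        calc |x (k + 2) - xs| ≤ ρ ^ 2 * |x k - xs| := htwostep k
          _ ≤ ρ ^ 2 * (d0 * ρ ^ k) := mul_le_mul_of_nonneg_left ih.1 (by positivity)
          _ = d0 * ρ ^ (k + 2) := by ring
    -- Stage 2: one-step bound with factor μ(1 + ρ^k/2)
    have hεd0 : ε * d0 = μ / 2 := by rw [hd0]; field_simp
    have hεxs : ε * xs = -(μ / 2) := by rw [hxsval]; linarith only [hεd0]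
    have honestep : ∀ k, |x (k + 1) - xs| ≤ (μ * (1 + ρ ^ k / 2)) * |x k - xs| := by
      intro k
      rw [hfactor k]
      apply mul_le_mul_of_nonneg_right _ (abs_nonneg _)
      have habs : xs - x k ≤ |x k - xs| := by
        rw [abs_sub_comm]; exact le_abs_self _
      have h1 : ε * (xs - x k) ≤ ε * |x k - xs| := mul_le_mul_of_nonneg_left habs hε.le
      have h2 : ε * |x k - xs| ≤ ε * (d0 * ρ ^ k) :=
        mul_le_mul_of_nonneg_left (hstage1 k).1 hε.le
      have h3 : ε * (d0 * ρ ^ k) = μ / 2 * ρ ^ k := by rw [← hεd0]; ring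
      linarith only [h1, h2, h3, hεxs]
    -- main induction with exponential correction factor
    have hmain : ∀ k, |x k - xs| ≤ d0 * μ ^ k * Real.exp (∑ j ∈ Finset.range k, ρ ^ j / 2) := by
      intro k
      induction k with
      | zero => simp [hdx0]
      | succ k ih =>
        have hexp : (1 + ρ ^ k / 2) ≤ Real.exp (ρ ^ k / 2) := by
          have := Real.add_one_le_exp (ρ ^ k / 2)
          linarith
        calc |x (k + 1) - xs| ≤ (μ * (1 + ρ ^ k / 2)) * |x k - xs| := honestep k
          _ ≤ (μ * Real.exp (ρ ^ k / 2)) *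
                (d0 * μ ^ k * Real.exp (∑ j ∈ Finset.range k, ρ ^ j / 2)) := by
              apply mul_le_mul
              · exact mul_le_mul_of_nonneg_left hexp hμ0.le
              · exact ih
              · exact abs_nonneg _
              · positivity
          _ = d0 * μ ^ (k + 1) *
                (Real.exp (ρ ^ k / 2) * Real.exp (∑ j ∈ Finset.range k, ρ ^ j / 2)) := by ring
          _ = d0 * μ ^ (k + 1) * Real.exp (∑ j ∈ Finset.range (k + 1), ρ ^ j / 2) := by
              rw [Finset.sum_range_succ, Real.exp_add]
              ring
    -- bound on the exponential correction
    have hsumbound : ∀ k, (∑ j ∈ Finset.range k, ρ ^ j / 2) ≤ 1 / (2 * (1 - ρ)) := by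
      intro k
      have hgeom : (∑ j ∈ Finset.range k, ρ ^ j) * (ρ - 1) = ρ ^ k - 1 := geom_sum_mul ρ k
      have hρk : (0 : ℝ) ≤ ρ ^ k := by positivity
      have hsum : (∑ j ∈ Finset.range k, ρ ^ j) ≤ 1 / (1 - ρ) := by
        rw [le_div_iff₀ (by linarith only [hρ1] : (0 : ℝ) < 1 - ρ)]
        linarith only [hgeom, hρk]
      calc (∑ j ∈ Finset.range k, ρ ^ j / 2) = (∑ j ∈ Finset.range k, ρ ^ j) / 2 := by
            rw [← Finset.sum_div]
        _ ≤ (1 / (1 - ρ)) / 2 := by linarith only [hsum]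
        _ = 1 / (2 * (1 - ρ)) := by rw [div_div, mul_comm]
    refine ⟨d0 * Real.exp (1 / (2 * (1 - ρ))), fun k => ?_⟩
    calc |x k - xs| ≤ d0 * μ ^ k * Real.exp (∑ j ∈ Finset.range k, ρ ^ j / 2) := hmain k
      _ ≤ d0 * μ ^ k * Real.exp (1 / (2 * (1 - ρ))) :=
          mul_le_mul_of_nonneg_left (Real.exp_le_exp.2 (hsumbound k)) (by positivity)
      _ = d0 * Real.exp (1 / (2 * (1 - ρ))) * μ ^ k := by ring
  exact main (fun k => (fun x => ε * (x ^ 2 - 1))^[k] 0) rfl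
    (fun k => by simp [Function.iterate_succ_apply'])

set_option maxHeartbeats 1000000 in
/-- For real `ε` with `0 < |ε| < √3/2`, the critical orbit `f^k(0)` of
`f(x) = ε(x² − 1)` converges to the attracting fixed point
`x*_− = (1 − √(1+4ε²))/(2ε)`, with geometric rate `|1 − √(1+4ε²)|`. -/
theorem quadratic_map_critical_orbit_converges (ε : ℝ) (hε : ε ≠ 0)
    (hsmall : |ε| < Real.sqrt 3 / 2)
    (f : ℝ → ℝ) (hf : f = fun x => ε * (x ^ 2 - 1))
    (xs : ℝ) (hxs : xs = (1 - Real.sqrt (1 + 4 * ε ^ 2)) / (2 * ε)) :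
    Tendsto (fun k : ℕ => f^[k] 0) atTop (nhds xs) ∧
    ∃ C : ℝ, ∀ k : ℕ,
      |f^[k] 0 - xs| ≤ C * |1 - Real.sqrt (1 + 4 * ε ^ 2)| ^ k := by
  have h34 : ε ^ 2 < 3 / 4 := by
    have h3 : Real.sqrt 3 ^ 2 = 3 := Real.sq_sqrt (by norm_num)
    have h0 := abs_nonneg ε
    nlinarith only [sq_abs ε, h3, hsmall, abs_nonneg ε, Real.sqrt_nonneg 3]
  have hε2pos : 0 < ε ^ 2 := by
    rcases hε.lt_or_gt with h | h
    · nlinarith only [mul_pos_of_neg_of_neg h h]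
    · nlinarith only [mul_pos h h]
  have hs2 : Real.sqrt (1 + 4 * ε ^ 2) ^ 2 = 1 + 4 * ε ^ 2 := Real.sq_sqrt (by positivity)
  have hsnn : 0 ≤ Real.sqrt (1 + 4 * ε ^ 2) := Real.sqrt_nonneg _
  have hs1 : 1 < Real.sqrt (1 + 4 * ε ^ 2) := by nlinarith only [hs2, hsnn, hε2pos]
  have habsμ : |1 - Real.sqrt (1 + 4 * ε ^ 2)| = Real.sqrt (1 + 4 * ε ^ 2) - 1 := by
    rw [abs_of_nonpos (by linarith)]; ring
  have hμ1 : Real.sqrt (1 + 4 * ε ^ 2) - 1 < 1 := by nlinarith only [hs2, hsnn, h34]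
  have hbound : ∃ C : ℝ, ∀ k : ℕ,
      |f^[k] 0 - xs| ≤ C * (Real.sqrt (1 + 4 * ε ^ 2) - 1) ^ k := by
    rcases hε.lt_or_gt with hneg | hpos
    · obtain ⟨C, hC⟩ := quadratic_orbit_aux_pos (-ε) (by linarith) (by nlinarith only [h34])
      refine ⟨C, fun k => ?_⟩
      have hsq : (-ε) ^ 2 = ε ^ 2 := by ring
      have hCk := hC k
      rw [hsq] at hCk
      have horb : f^[k] 0 = -((fun x => (-ε) * (x ^ 2 - 1))^[k] 0) := by
        rw [hf]; exact quadratic_neg_orbit ε k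
      have hxs' : xs = -((1 - Real.sqrt (1 + 4 * ε ^ 2)) / (2 * (-ε))) := by
        rw [hxs]; ring
      rw [horb, hxs', show -((fun x => (-ε) * (x ^ 2 - 1))^[k] 0) -
            -((1 - Real.sqrt (1 + 4 * ε ^ 2)) / (2 * (-ε))) =
          -(((fun x => (-ε) * (x ^ 2 - 1))^[k] 0) -
            (1 - Real.sqrt (1 + 4 * ε ^ 2)) / (2 * (-ε))) by ring, abs_neg]
      exact hCk
    · obtain ⟨C, hC⟩ := quadratic_orbit_aux_pos ε hpos h34
      refine ⟨C, fun k => ?_⟩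
      rw [hf, hxs]
      exact hC k
  obtain ⟨C, hC⟩ := hbound
  constructor
  · rw [← tendsto_sub_nhds_zero_iff]
    have htend : Tendsto (fun k : ℕ => C * (Real.sqrt (1 + 4 * ε ^ 2) - 1) ^ k)
        atTop (nhds 0) := by
      have h0 : |Real.sqrt (1 + 4 * ε ^ 2) - 1| < 1 := by
        rw [abs_of_nonneg (by linarith)]; exact hμ1
      simpa using (tendsto_pow_atTop_nhds_zero_of_abs_lt_one h0).const_mul C
    exact squeeze_zero_norm (fun k => by rw [Real.norm_eq_abs]; exact hC k) htend
  · refine ⟨C, fun k => ?_⟩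
    rw [habsμ]
    exact hC k
end

section
/- Rayleigh–Schrödinger recursion: let D be diagonal with distinct entries ε_i, Δ ∈ ℂ^{n×n}, G the inverse gaps matrix, and define matrices A^{[0]} = I and A^{[ℓ]} = G ∘ ( Σ_{s=0}^{ℓ−1} A^{[ℓ−1−s]}·𝒟(Δ A^{[s]}) − Δ A^{[ℓ−1]} ) for ℓ ≥ 1. Then each A^{[ℓ]} for ℓ ≥ 1 has zero diagonal, and for each i, the formal power series z_i(ε) = Σ_ℓ ε^ℓ (A^{[ℓ]} e_i) satisfies (D + εΔ) z_i = λ_i z_i as formal power series, with λ_i = ε_i + Σ_{ℓ≥1} ε^ℓ (Δ A^{[ℓ−1]})_{ii}. -/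
open Matrix

/-- Rayleigh–Schrödinger recursion: with `A⁰ = I` and
`Aℓ⁺¹ = G ∘ (Σ_{s≤ℓ} A^{ℓ−s}·𝒟(ΔAˢ) − ΔAℓ)`, each `Aℓ` (`ℓ ≥ 1`) has zero
diagonal, and the formal power series `z_i = Σ εᵏ (Aᵏ e_i)` satisfies
`(D + εΔ) z_i = λ_i z_i` coefficientwise, with
`λ_i = ε_i + Σ_{ℓ≥1} εˡ (ΔA^{ℓ−1})_{ii}`. -/
theorem rayleigh_schrodinger_recursion {n : ℕ} (ε : Fin n → ℂ)
    (hdist : Function.Injective ε) (Δ : Matrix (Fin n) (Fin n) ℂ)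
    (G : Matrix (Fin n) (Fin n) ℂ)
    (hG : G = Matrix.of fun j k => if j = k then 0 else (ε j - ε k)⁻¹)
    (A : ℕ → Matrix (Fin n) (Fin n) ℂ) (hA0 : A 0 = 1)
    (hA : ∀ ℓ : ℕ, A (ℓ + 1) =
      G ⊙ (∑ s ∈ Finset.range (ℓ + 1),
              A (ℓ - s) * Matrix.diagonal (fun j => (Δ * A s) j j)
            - Δ * A ℓ))
    (i : Fin n) (lam : ℕ → ℂ) (hlam0 : lam 0 = ε i)
    (hlam : ∀ ℓ : ℕ, lam (ℓ + 1) = (Δ * A ℓ) i i) :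
    (∀ ℓ : ℕ, ∀ j : Fin n, A (ℓ + 1) j j = 0) ∧
    (Matrix.diagonal ε).mulVec (fun j => A 0 j i) =
      lam 0 • (fun j => A 0 j i) ∧
    ∀ m : ℕ,
      ((Matrix.diagonal ε).mulVec (fun j => A (m + 1) j i)
          + Δ.mulVec (fun j => A m j i)) =
        ∑ s ∈ Finset.range (m + 2), lam s • (fun j => A (m + 1 - s) j i) := by
  have hdiag : ∀ ℓ : ℕ, ∀ j : Fin n, A (ℓ + 1) j j = 0 := by
    intro ℓ j
    rw [hA]
    simp [Matrix.hadamard_apply, hG]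
  refine ⟨hdiag, ?_, ?_⟩
  · funext j
    by_cases h : j = i <;>
      simp [hA0, Matrix.mulVec_diagonal, Matrix.one_apply, hlam0, h]
  · intro m
    funext j
    -- entrywise recursion
    have hrec : A (m + 1) j i =
        G j i * ((∑ s ∈ Finset.range (m + 1),
            A (m - s) j i * (Δ * A s) i i) - (Δ * A m) j i) := by
      have := congrArg (fun M : Matrix (Fin n) (Fin n) ℂ => M j i) (hA m)
      simpa [Matrix.hadamard_apply, Matrix.sub_apply, Matrix.sum_apply,
        Matrix.mul_diagonal] using this
    have key : (ε j - ε i) * A (m + 1) j i =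
        (∑ s ∈ Finset.range (m + 1), A (m - s) j i * (Δ * A s) i i)
          - (Δ * A m) j i := by
      by_cases h : j = i
      · subst h
        rw [hdiag m j, mul_zero]
        have hsum : (∑ s ∈ Finset.range (m + 1), A (m - s) j j * (Δ * A s) j j)
            = (Δ * A m) j j := by
          rw [Finset.sum_eq_single_of_mem m (Finset.self_mem_range_succ m)]
          · simp [Nat.sub_self, hA0, Matrix.one_apply]
          · intro s hs hne
            have hlt : s < m := lt_of_le_of_ne (Nat.lt_succ_iff.mp (Finset.mem_range.mp hs)) hne
            have : m - s = (m - s - 1) + 1 := (Nat.succ_pred_eq_of_ne_zero (Nat.sub_ne_zero_of_lt hlt)).symm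
            rw [this, hdiag, zero_mul]
        rw [hsum, sub_self]
      · have hne : ε j - ε i ≠ 0 := sub_ne_zero.mpr fun hc => h (hdist hc)
        rw [hrec, hG]
        simp only [Matrix.of_apply, if_neg h]
        field_simp
    -- now the coefficient identity
    have hmv : Δ.mulVec (fun j => A m j i) j = (Δ * A m) j i := by
      simp [Matrix.mulVec, Matrix.mul_apply, dotProduct]
    simp only [Pi.add_apply, Matrix.mulVec_diagonal, Finset.sum_apply,
      Pi.smul_apply, smul_eq_mul, hmv]
    rw [Finset.sum_range_succ']
    simp only [hlam, hlam0, Nat.succ_sub_succ_eq_sub, Nat.sub_zero]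
    have : ∑ s ∈ Finset.range (m + 1), (Δ * A s) i i * A (m - s) j i
        = ∑ s ∈ Finset.range (m + 1), A (m - s) j i * (Δ * A s) i i := by
      exact Finset.sum_congr rfl fun s _ => mul_comm _ _
    rw [this]
    linear_combination key
end

section
/- IPT contains the RS series: with F(Z) = I + ε·G ∘ (Z·𝒟(ΔZ) − ΔZ) (perturbation εΔ) and Z^{(k)} = F^k(I), one has Z^{(k)} = Σ_{ℓ=0}^{k} ε^ℓ A^{[ℓ]} + O(ε^{k+1}), where A^{[ℓ]} are the Rayleigh–Schrödinger correction matrices defined by A^{[0]} = I and A^{[ℓ]} = G ∘ ( Σ_{s=0}^{ℓ−1} A^{[ℓ−1−s]}·𝒟(Δ A^{[s]}) − Δ A^{[ℓ−1]} ). -/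
open Matrix Polynomial

/-- IPT contains the Rayleigh–Schrödinger series: with the perturbation `εΔ` treated
as a formal (polynomial) variable, the `k`-th IPT iterate `Z^(k) = F^k(I)` agrees,
in every coefficient of `ε^ℓ` with `ℓ ≤ k`, with the RS partial sum `Σ εˡ Aˡ`. -/
theorem IPT_contains_RS_series {n : ℕ} (ε : Fin n → ℂ)
    (hdist : Function.Injective ε) (Δ : Matrix (Fin n) (Fin n) ℂ)
    (G : Matrix (Fin n) (Fin n) ℂ)
    (hG : G = Matrix.of fun j k => if j = k then 0 else (ε j - ε k)⁻¹)
    (A : ℕ → Matrix (Fin n) (Fin n) ℂ) (hA0 : A 0 = 1)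
    (hA : ∀ ℓ : ℕ, A (ℓ + 1) =
      G ⊙ (∑ s ∈ Finset.range (ℓ + 1),
              A (ℓ - s) * Matrix.diagonal (fun j => (Δ * A s) j j)
            - Δ * A ℓ))
    (F : Matrix (Fin n) (Fin n) (Polynomial ℂ) → Matrix (Fin n) (Fin n) (Polynomial ℂ))
    (hF : F = fun Z =>
      1 + (G.map Polynomial.C) ⊙
        (Z * Matrix.diagonal
            (fun i => (((Polynomial.X : Polynomial ℂ) • Δ.map Polynomial.C) * Z) i i)
          - ((Polynomial.X : Polynomial ℂ) • Δ.map Polynomial.C) * Z)) :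
    ∀ k ℓ : ℕ, ℓ ≤ k → ∀ i j : Fin n,
      ((F^[k] 1) i j).coeff ℓ = A ℓ i j := by
  intro k
  induction k with
  | zero =>
    intro ℓ hℓ i j
    obtain rfl : ℓ = 0 := Nat.le_zero.mp hℓ
    rw [Function.iterate_zero_apply, hA0]
    by_cases h : i = j <;> simp [Matrix.one_apply, h]
  | succ k ih =>
    intro ℓ hℓ i j
    rw [Function.iterate_succ_apply']
    set Z := F^[k] 1 with hZ
    set V := Δ.map Polynomial.C * Z with hV
    -- coefficients of V
    have hVc : ∀ b ≤ k, ∀ i j : Fin n, (V i j).coeff b = (Δ * A b) i j := by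
      intro b hb i j
      rw [hV, Matrix.mul_apply, Polynomial.finset_sum_coeff, Matrix.mul_apply]
      refine Finset.sum_congr rfl fun x _ => ?_
      rw [Matrix.map_apply, Polynomial.coeff_C_mul, ih b hb]
    -- rewrite the entry of F Z
    have hsm : ((Polynomial.X : Polynomial ℂ) • Δ.map Polynomial.C) * Z
        = (Polynomial.X : Polynomial ℂ) • V := smul_mul_assoc ..
    have hentry : (F Z) i j = (1 : Matrix (Fin n) (Fin n) (Polynomial ℂ)) i j
        + Polynomial.C (G i j) *
          (Z i j * (Polynomial.X * V j j) - Polynomial.X * V i j) := by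
      rw [hF]
      simp only [hsm, Matrix.add_apply, Matrix.hadamard_apply, Matrix.sub_apply,
        Matrix.mul_diagonal, Matrix.smul_apply, smul_eq_mul, Matrix.map_apply]
    rw [hentry]
    rcases ℓ with _ | m
    · -- ℓ = 0
      rw [hA0]
      have : (Z i j * (Polynomial.X * V j j) - Polynomial.X * V i j).coeff 0 = 0 := by
        simp [Polynomial.coeff_sub, Polynomial.mul_coeff_zero]
      simp only [Polynomial.coeff_add, Polynomial.coeff_C_mul, this, mul_zero, add_zero]
      by_cases h : i = j <;> simp [Matrix.one_apply, h]
    · -- ℓ = m + 1, m ≤ k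
      have hm : m ≤ k := Nat.succ_le_succ_iff.mp hℓ
      have h1 : ((1 : Matrix (Fin n) (Fin n) (Polynomial ℂ)) i j).coeff (m + 1) = 0 := by
        by_cases h : i = j <;> simp [Matrix.one_apply, h, Polynomial.coeff_one]
      have hXV : (Polynomial.X * V i j).coeff (m + 1) = (Δ * A m) i j := by
        rw [Polynomial.coeff_X_mul, hVc m hm]
      have hprod : (Z i j * (Polynomial.X * V j j)).coeff (m + 1)
          = ∑ s ∈ Finset.range (m + 1), A (m - s) i j * (Δ * A s) j j := by
        have : Z i j * (Polynomial.X * V j j) = Polynomial.X * (Z i j * V j j) := by ring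
        rw [this, Polynomial.coeff_X_mul, Polynomial.coeff_mul,
          Finset.Nat.sum_antidiagonal_eq_sum_range_succ
            (f := fun a b => (Z i j).coeff a * (V j j).coeff b)]
        rw [← Finset.sum_range_reflect]
        refine Finset.sum_congr rfl fun s hs => ?_
        rw [Finset.mem_range] at hs
        have hs' : s ≤ m := Nat.lt_succ_iff.mp hs
        have e1 : m + 1 - 1 - s = m - s := by omega
        have e2 : m - (m - s) = s := by omega
        rw [e1, e2, ih (m - s) (le_trans (Nat.sub_le m s) hm),
          hVc s (le_trans hs' hm)]
      rw [Polynomial.coeff_add, h1, Polynomial.coeff_C_mul, Polynomial.coeff_sub,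
        hXV, hprod, zero_add, hA m]
      rw [Matrix.hadamard_apply, Matrix.sub_apply, Matrix.sum_apply]
      congr 1
      congr 1
      refine Finset.sum_congr rfl fun s _ => ?_
      rw [Matrix.mul_diagonal]
end

section
/- If an n×n complex matrix M has an eigenvalue of algebraic multiplicity greater than one, then for every partition M̃ = D̃ + Δ̃ of any matrix M̃ similar to M, where D̃ is diagonal with pairwise distinct diagonal entries and G̃ is the associated inverse gaps matrix, one has ‖G̃‖‖Δ̃‖ ≥ 3 − 2√2. -/
open Matrix
open scoped Matrix.Norms.L2Operator

namespace IPTAux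
open Polynomial
variable {n : ℕ}

noncomputable def toE (x : Fin n → ℂ) : EuclideanSpace ℂ (Fin n) :=
  (WithLp.equiv 2 _).symm x

lemma toE_apply (x : Fin n → ℂ) (k : Fin n) : toE x k = x k := rfl
lemma toE_sub (x y : Fin n → ℂ) : toE (x - y) = toE x - toE y := rfl
lemma toE_add (x y : Fin n → ℂ) : toE (x + y) = toE x + toE y := rfl

lemma norm_toE (x : Fin n → ℂ) : ‖toE x‖ = Real.sqrt (∑ k, ‖x k‖ ^ 2) := by
  rw [EuclideanSpace.norm_eq]; rfl

lemma norm_toE_le {C : ℝ} (hC : 0 ≤ C) {x y : Fin n → ℂ}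
    (h : ∀ k, ‖x k‖ ≤ C * ‖y k‖) : ‖toE x‖ ≤ C * ‖toE y‖ := by
  rw [norm_toE, norm_toE, ← Real.sqrt_sq hC, ← Real.sqrt_mul (sq_nonneg C)]
  apply Real.sqrt_le_sqrt
  rw [Finset.mul_sum]
  refine Finset.sum_le_sum fun k _ => ?_
  have hk := h k
  have := norm_nonneg (x k)
  nlinarith [norm_nonneg (y k)]

lemma coord_le_norm_toE (x : Fin n → ℂ) (k : Fin n) : ‖x k‖ ≤ ‖toE x‖ := by
  rw [norm_toE, ← Real.sqrt_sq (norm_nonneg (x k))]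
  exact Real.sqrt_le_sqrt (Finset.single_le_sum (f := fun i => ‖x i‖ ^ 2)
    (fun i _ => sq_nonneg _) (Finset.mem_univ k))

lemma norm_toE_mulVec (A : Matrix (Fin n) (Fin n) ℂ) (x : Fin n → ℂ) :
    ‖toE (A *ᵥ x)‖ ≤ ‖A‖ * ‖toE x‖ := by
  simpa [toE] using A.l2_opNorm_mulVec (toE x)

lemma norm_toE_single (j : Fin n) : ‖toE (Pi.single j (1:ℂ))‖ = 1 := by
  have : toE (Pi.single j (1:ℂ)) = EuclideanSpace.single j (1:ℂ) := rfl
  rw [this, EuclideanSpace.norm_single, norm_one]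

-- sanity checks on defeq
example (w : EuclideanSpace ℂ (Fin n)) : toE (fun k => w k) = w := rfl
example (w w' : EuclideanSpace ℂ (Fin n)) : toE (fun k => w k - w' k) = w - w' := rfl
example (j : Fin n) (w : EuclideanSpace ℂ (Fin n)) :
    toE (fun k => (Pi.single j (1:ℂ) : Fin n → ℂ) k + w k) = toE (Pi.single j 1) + w := rfl

lemma eval_charpoly (A : Matrix (Fin n) (Fin n) ℂ) (x : ℂ) :
    A.charpoly.eval x = (Matrix.diagonal (fun _ => x) - A).det := by
  rw [Matrix.charpoly, ← Polynomial.coe_evalRingHom, RingHom.map_det]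
  congr 1
  ext i k
  by_cases h : i = k
  · subst h
    simp [Matrix.charmatrix_apply_eq, Matrix.map_apply]
  · simp [Matrix.charmatrix_apply_ne _ _ _ h, Matrix.map_apply, Matrix.diagonal_apply_ne _ h,
      Matrix.sub_apply]

lemma charpoly_conj (S M : Matrix (Fin n) (Fin n) ℂ) (hS : IsUnit S.det) :
    (S * M * S⁻¹).charpoly = M.charpoly := by
  have hinv : S * S⁻¹ = 1 := Matrix.mul_nonsing_inv S hS
  let f : ℂ →+* ℂ[X] := Polynomial.C
  have hmap : f.mapMatrix S * f.mapMatrix S⁻¹ = 1 := by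
    rw [← _root_.map_mul, hinv, _root_.map_one]
  have h1 : charmatrix (S * M * S⁻¹) =
      f.mapMatrix S * charmatrix M * f.mapMatrix S⁻¹ := by
    rw [charmatrix, charmatrix]
    have hsc : Matrix.scalar (Fin n) (X : ℂ[X]) = (X : ℂ[X]) • (1 : Matrix (Fin n) (Fin n) ℂ[X]) := by
      ext i k
      by_cases h : i = k <;> simp [Matrix.scalar, h, Matrix.smul_apply, Matrix.one_apply]
    rw [hsc]
    rw [mul_sub, sub_mul, mul_smul_comm, smul_mul_assoc, mul_one, hmap,
      _root_.map_mul, _root_.map_mul]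
  unfold Matrix.charpoly
  rw [h1, Matrix.det_mul, Matrix.det_mul]
  have : (f.mapMatrix S).det * (f.mapMatrix S⁻¹).det = 1 := by
    rw [← Matrix.det_mul, hmap, Matrix.det_one]
  calc (f.mapMatrix S).det * (charmatrix M).det * (f.mapMatrix S⁻¹).det
      = (f.mapMatrix S).det * (f.mapMatrix S⁻¹).det * (charmatrix M).det := by ring
    _ = (charmatrix M).det := by rw [this, one_mul]


lemma entry_le_norm (A : Matrix (Fin n) (Fin n) ℂ) (j k : Fin n) :
    ‖A j k‖ ≤ ‖A‖ := by
  have h1 : A j k = (A *ᵥ Pi.single k 1) j := by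
    simp [Matrix.mulVec_single]
  calc ‖A j k‖ = ‖(A *ᵥ Pi.single k 1) j‖ := by rw [h1]
    _ ≤ ‖toE (A *ᵥ Pi.single k 1)‖ := coord_le_norm_toE _ _
    _ ≤ ‖A‖ * ‖toE (Pi.single k (1:ℂ))‖ := norm_toE_mulVec _ _
    _ = ‖A‖ := by rw [norm_toE_single, mul_one]


lemma key (ε : Fin n → ℂ) (Δ : Matrix (Fin n) (Fin n) ℂ) {g : ℝ}
    (hgap : ∀ j k : Fin n, j ≠ k → g ≤ ‖ε j - ε k‖)
    (hr : ‖Δ‖ < g / 4) (j : Fin n) :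
    ∃ lam : ℂ, ∃ v : Fin n → ℂ, v j = 1 ∧ (Matrix.diagonal ε + Δ) *ᵥ v = lam • v ∧
      ‖lam - ε j‖ ≤ 2 * ‖Δ‖ := by
  classical
  set r := ‖Δ‖ with hrdef
  have hr0 : 0 ≤ r := norm_nonneg _
  have hg : 0 < g := by linarith
  set m := g - 2 * r with hmdef
  have hm : 0 < m := by simp only [hmdef]; linarith
  have h2rm : 2 * r ≤ m := by simp only [hmdef]; linarith
  -- the ball
  set s : Set (EuclideanSpace ℂ (Fin n)) := Metric.closedBall 0 1 with hsdef
  -- auxiliary maps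
  set uu : EuclideanSpace ℂ (Fin n) → (Fin n → ℂ) :=
    fun w k => (Pi.single j (1:ℂ) : Fin n → ℂ) k + w k with huu
  set lamf : EuclideanSpace ℂ (Fin n) → ℂ := fun w => ε j + (Δ *ᵥ uu w) j with hlamf
  set Ff : EuclideanSpace ℂ (Fin n) → (Fin n → ℂ) :=
    fun w k => if k = j then 0 else (Δ *ᵥ uu w) k / (lamf w - ε k) with hFf
  set f : EuclideanSpace ℂ (Fin n) → EuclideanSpace ℂ (Fin n) := fun w => toE (Ff w) with hf
  -- basic estimates on s
  have hnorm_u : ∀ w : EuclideanSpace ℂ (Fin n), w ∈ s → ‖toE (uu w)‖ ≤ 2 := by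
    intro w hw
    have hw1 : ‖w‖ ≤ 1 := by rwa [hsdef, Metric.mem_closedBall, dist_zero_right] at hw
    have : toE (uu w) = toE (Pi.single j 1) + w := rfl
    rw [this]
    calc ‖toE (Pi.single j (1:ℂ)) + w‖ ≤ ‖toE (Pi.single j (1:ℂ))‖ + ‖w‖ := norm_add_le _ _
      _ ≤ 1 + 1 := by rw [norm_toE_single]; linarith
      _ = 2 := by norm_num
  have hDu : ∀ w : EuclideanSpace ℂ (Fin n), w ∈ s → ‖toE (Δ *ᵥ uu w)‖ ≤ 2 * r := by
    intro w hw
    calc ‖toE (Δ *ᵥ uu w)‖ ≤ r * ‖toE (uu w)‖ := norm_toE_mulVec _ _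
      _ ≤ r * 2 := by have := hnorm_u w hw; nlinarith
      _ = 2 * r := by ring
  have hlj : ∀ w : EuclideanSpace ℂ (Fin n), w ∈ s → ‖lamf w - ε j‖ ≤ 2 * r := by
    intro w hw
    have h1 : lamf w - ε j = (Δ *ᵥ uu w) j := by simp [hlamf]
    rw [h1]
    exact (coord_le_norm_toE _ j).trans (hDu w hw)
  have hlk : ∀ w : EuclideanSpace ℂ (Fin n), w ∈ s → ∀ k : Fin n, k ≠ j →
      m ≤ ‖lamf w - ε k‖ := by
    intro w hw k hk
    have h1 : ε j - ε k = (lamf w - ε k) - (lamf w - ε j) := by ring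
    have h2 : g ≤ ‖(lamf w - ε k) - (lamf w - ε j)‖ := h1 ▸ hgap j k (Ne.symm hk)
    have h3 : ‖(lamf w - ε k) - (lamf w - ε j)‖ ≤ ‖lamf w - ε k‖ + ‖lamf w - ε j‖ :=
      norm_sub_le _ _
    have h4 := hlj w hw
    simp only [hmdef]; linarith
  have hlk0 : ∀ w : EuclideanSpace ℂ (Fin n), w ∈ s → ∀ k : Fin n, k ≠ j →
      lamf w - ε k ≠ 0 := by
    intro w hw k hk h0
    have := hlk w hw k hk
    rw [h0, norm_zero] at this
    linarith
  -- self-map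
  have hFf_le : ∀ w : EuclideanSpace ℂ (Fin n), w ∈ s →
      ‖toE (Ff w)‖ ≤ (1 / m) * ‖toE (Δ *ᵥ uu w)‖ := by
    intro w hw
    refine norm_toE_le (by positivity) fun k => ?_
    by_cases hk : k = j
    · simp only [hFf, hk, if_pos rfl, norm_zero]
      positivity
    · simp only [hFf, if_neg hk, norm_div]
      rw [one_div, inv_mul_eq_div]
      gcongr
      exact hlk w hw k hk
  have hmaps : Set.MapsTo f s s := by
    intro w hw
    rw [hsdef, Metric.mem_closedBall, dist_zero_right]
    have h1 := (hFf_le w hw).trans (by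
      have := hDu w hw
      have h1m : 0 ≤ 1 / m := by positivity
      exact mul_le_mul_of_nonneg_left this h1m)
    have h2 : (1 / m) * (2 * r) ≤ 1 := by
      rw [div_mul_eq_mul_div, one_mul, div_le_one hm]; exact h2rm
    exact h1.trans h2
  -- contraction constant
  set K : ℝ := r / m + 2 * r ^ 2 / m ^ 2 with hKdef
  have hK0 : 0 ≤ K := by positivity
  have hK1 : K < 1 := by
    have hmm : (0:ℝ) < m ^ 2 := by positivity
    have key : r * m + 2 * r ^ 2 < m ^ 2 := by nlinarith
    have : K = (r * m + 2 * r ^ 2) / m ^ 2 := by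
      rw [hKdef, div_add_div _ _ (by positivity) (by positivity),
        div_eq_div_iff (by positivity) (by positivity)]; ring
    rw [this, div_lt_one hmm]; exact key
  -- Lipschitz estimate on s
  have hlip : ∀ w ∈ s, ∀ w' ∈ s, dist (f w) (f w') ≤ K * dist w w' := by
    intro w hw w' hw'
    set d : Fin n → ℂ := fun k => w k - w' k with hd
    have hdist : dist w w' = ‖toE d‖ := by
      rw [dist_eq_norm]; rfl
    have hdist0 : 0 ≤ ‖toE d‖ := norm_nonneg _
    have hlamd : ‖lamf w' - lamf w‖ ≤ r * ‖toE d‖ := by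
      have h1 : lamf w' - lamf w = (Δ *ᵥ (fun k => uu w' k - uu w k)) j := by
        simp only [hlamf]
        have : (fun k => uu w' k - uu w k) = (uu w') - (uu w) := rfl
        rw [this, Matrix.mulVec_sub]
        simp
      have h2 : (fun k => uu w' k - uu w k) = fun k => w' k - w k := by
        funext k; simp [huu]
      rw [h1, h2]
      have h3 : ‖toE (fun k => w' k - w k)‖ = ‖toE d‖ := by
        simp only [norm_toE, hd, norm_sub_rev]
      calc ‖(Δ *ᵥ fun k => w' k - w k) j‖ ≤ ‖toE (Δ *ᵥ fun k => w' k - w k)‖ :=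
            coord_le_norm_toE _ _
        _ ≤ r * ‖toE (fun k => w' k - w k)‖ := norm_toE_mulVec _ _
        _ = r * ‖toE d‖ := by rw [h3]
    set δ1 : Fin n → ℂ := fun k => if k = j then 0 else (Δ *ᵥ d) k / (lamf w - ε k) with hδ1
    set δ2 : Fin n → ℂ := fun k => if k = j then 0 else
      (Δ *ᵥ uu w') k * (lamf w' - lamf w) / ((lamf w - ε k) * (lamf w' - ε k)) with hδ2
    have hsplit : Ff w - Ff w' = δ1 + δ2 := by
      funext k
      by_cases hk : k = j
      · simp [hFf, hδ1, hδ2, hk]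
      · have hc := hlk0 w hw k hk
        have hc' := hlk0 w' hw' k hk
        have hab : (Δ *ᵥ uu w) k = (Δ *ᵥ uu w') k + (Δ *ᵥ d) k := by
          have : uu w = uu w' + d := by
            funext i; simp [huu, hd]
          rw [this, Matrix.mulVec_add]; rfl
        simp only [Pi.sub_apply, Pi.add_apply, hFf, hδ1, hδ2, if_neg hk]
        rw [hab]
        field_simp
        ring
    have hb1 : ‖toE δ1‖ ≤ (1 / m) * ‖toE (Δ *ᵥ d)‖ := by
      refine norm_toE_le (by positivity) fun k => ?_
      by_cases hk : k = j
      · simp only [hδ1, hk, if_pos rfl, norm_zero]; positivity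
      · simp only [hδ1, if_neg hk, norm_div]
        rw [one_div, inv_mul_eq_div]
        gcongr
        exact hlk w hw k hk
    have hb2 : ‖toE δ2‖ ≤ (‖lamf w' - lamf w‖ / m ^ 2) * ‖toE (Δ *ᵥ uu w')‖ := by
      refine norm_toE_le (by positivity) fun k => ?_
      by_cases hk : k = j
      · simp only [hδ2, hk, if_pos rfl, norm_zero]; positivity
      · simp only [hδ2, if_neg hk, norm_div, norm_mul]
        have e1 : ‖lamf w' - lamf w‖ / m ^ 2 * ‖(Δ *ᵥ uu w') k‖ =
            ‖(Δ *ᵥ uu w') k‖ * ‖lamf w' - lamf w‖ / (m * m) := by ring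
        rw [e1]
        gcongr
        · exact hlk w hw k hk
        · exact hlk w' hw' k hk
    have hdd : ‖toE (Δ *ᵥ d)‖ ≤ r * ‖toE d‖ := norm_toE_mulVec _ _
    have hfin : dist (f w) (f w') ≤ ‖toE δ1‖ + ‖toE δ2‖ := by
      rw [dist_eq_norm]
      have e1 : f w - f w' = toE (Ff w - Ff w') := rfl
      rw [e1, hsplit, toE_add]
      exact norm_add_le _ _
    have hDu' := hDu w' hw'
    have hlam0 : 0 ≤ ‖lamf w' - lamf w‖ := norm_nonneg _
    calc dist (f w) (f w') ≤ ‖toE δ1‖ + ‖toE δ2‖ := hfin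
      _ ≤ (1 / m) * (r * ‖toE d‖) + (‖lamf w' - lamf w‖ / m ^ 2) * (2 * r) := by
          gcongr
          · exact hb1.trans (mul_le_mul_of_nonneg_left hdd (by positivity))
          · exact hb2.trans (mul_le_mul_of_nonneg_left hDu' (by positivity))
      _ ≤ (1 / m) * (r * ‖toE d‖) + ((r * ‖toE d‖) / m ^ 2) * (2 * r) := by
          gcongr
      _ = K * ‖toE d‖ := by rw [hKdef]; ring
      _ = K * dist w w' := by rw [hdist]
  -- apply the Banach fixed point theorem
  have hsc : IsComplete s := Metric.isClosed_closedBall.isComplete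
  have hlip' : LipschitzOnWith K.toNNReal f s := by
    apply LipschitzOnWith.of_dist_le_mul
    intro x hx y hy
    rw [Real.coe_toNNReal _ hK0]
    exact hlip x hx y hy
  have hcontr : ContractingWith K.toNNReal (hmaps.restrict f s s) :=
    ⟨Real.toNNReal_lt_one.mpr hK1, hlip'.mapsToRestrict hmaps⟩
  have h0s : (0 : EuclideanSpace ℂ (Fin n)) ∈ s := Metric.mem_closedBall_self (by norm_num)
  obtain ⟨y, hys, hfy, -, -⟩ :=
    hcontr.exists_fixedPoint' hsc hmaps h0s (edist_ne_top _ _)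
  -- extract the eigenvector
  have hyk : ∀ k : Fin n, y k = Ff y k := by
    intro k
    conv_lhs => rw [← hfy]
    rfl
  refine ⟨lamf y, uu y, ?_, ?_, hlj y hys⟩
  · simp only [huu]
    rw [hyk j]
    simp [hFf]
  · funext k
    have hveq : ((Matrix.diagonal ε + Δ) *ᵥ uu y) k = ε k * uu y k + (Δ *ᵥ uu y) k := by
      rw [Matrix.add_mulVec]
      simp [Matrix.mulVec_diagonal]
    rw [hveq]
    by_cases hk : k = j
    · subst hk
      have h1 : uu y k = 1 := by
        simp only [huu]; rw [hyk k]; simp [hFf]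
      rw [h1, Pi.smul_apply, h1, smul_eq_mul, mul_one]
      simp [hlamf]
    · have hc := hlk0 y hys k hk
      have h1 : uu y k = (Δ *ᵥ uu y) k / (lamf y - ε k) := by
        simp only [huu]
        rw [hyk k]
        simp [hFf, huu, if_neg hk, Pi.single_eq_of_ne hk]
      rw [Pi.smul_apply, smul_eq_mul]
      rw [h1]
      field_simp
      ring
end IPTAux

/-- If `M` has an eigenvalue of algebraic multiplicity greater than one, then every
partition `M̃ = D̃ + Δ̃` of any matrix `M̃` similar to `M`, with `D̃` diagonal with
pairwise distinct entries and `G̃` the inverse gaps matrix, satisfies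
`‖G̃‖‖Δ̃‖ ≥ 3 − 2√2`. -/
theorem multiple_eigenvalue_obstruction {n : ℕ} [NeZero n]
    (M : Matrix (Fin n) (Fin n) ℂ)
    (hmult : ∃ μ : ℂ, 1 < M.charpoly.rootMultiplicity μ) :
    ∀ (S : Matrix (Fin n) (Fin n) ℂ), IsUnit S.det →
    ∀ (ε : Fin n → ℂ), Function.Injective ε →
    ∀ (Δ : Matrix (Fin n) (Fin n) ℂ),
      S * M * S⁻¹ = Matrix.diagonal ε + Δ →
      3 - 2 * Real.sqrt 2 ≤
        ‖(Matrix.of fun j k => if j = k then 0 else (ε j - ε k)⁻¹ :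
            Matrix (Fin n) (Fin n) ℂ)‖ * ‖Δ‖ := by
  classical
  intro S hS ε hε Δ hA
  by_contra hcon
  push_neg at hcon
  set G : Matrix (Fin n) (Fin n) ℂ :=
    Matrix.of fun j k => if j = k then 0 else (ε j - ε k)⁻¹ with hG
  have hchar : (Matrix.diagonal ε + Δ).charpoly = M.charpoly := by
    rw [← hA]; exact IPTAux.charpoly_conj S M hS
  set A : Matrix (Fin n) (Fin n) ℂ := Matrix.diagonal ε + Δ with hAdef
  obtain ⟨μ, hμ⟩ := hmult
  have hμA : 1 < A.charpoly.rootMultiplicity μ := by rw [hchar]; exact hμ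
  have hsq : Real.sqrt 2 ^ 2 = 2 := Real.sq_sqrt (by norm_num)
  have hsqnn : 0 ≤ Real.sqrt 2 := Real.sqrt_nonneg 2
  have hc4 : 3 - 2 * Real.sqrt 2 < 1 / 4 := by nlinarith
  -- find a suitable lower bound `g` on the gaps
  have hgap_ex : ∃ g : ℝ, (∀ j k : Fin n, j ≠ k → g ≤ ‖ε j - ε k‖) ∧ ‖Δ‖ < g / 4 := by
    rcases le_or_gt n 1 with hn | hn
    · refine ⟨4 * ‖Δ‖ + 1, fun j k hjk => absurd ?_ hjk, by linarith⟩
      have hj := j.isLt; have hk := k.isLt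
      exact Fin.ext (by omega)
    · have ha0 : 0 < ‖G‖ := by
        have hne : (⟨0, by omega⟩ : Fin n) ≠ ⟨1, hn⟩ := by simp [Fin.ext_iff]
        have hGe : G ⟨0, by omega⟩ ⟨1, hn⟩ = (ε ⟨0, by omega⟩ - ε ⟨1, hn⟩)⁻¹ := by
          simp [hG, hne]
        have hnz : G ⟨0, by omega⟩ ⟨1, hn⟩ ≠ 0 := by
          rw [hGe]
          exact inv_ne_zero (sub_ne_zero.mpr (hε.ne hne))
        calc (0:ℝ) < ‖G ⟨0, by omega⟩ ⟨1, hn⟩‖ := norm_pos_iff.mpr hnz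
          _ ≤ ‖G‖ := IPTAux.entry_le_norm G _ _
      refine ⟨‖G‖⁻¹, ?_, ?_⟩
      · intro j k hjk
        have hej : ε j ≠ ε k := hε.ne hjk
        have hpos : 0 < ‖ε j - ε k‖ := norm_pos_iff.mpr (sub_ne_zero.mpr hej)
        have h1 : ‖ε j - ε k‖⁻¹ ≤ ‖G‖ := by
          have hGe : G j k = (ε j - ε k)⁻¹ := by simp [hG, hjk]
          have := IPTAux.entry_le_norm G j k
          rwa [hGe, norm_inv] at this
        have h2 := inv_anti₀ (by positivity) h1
        rwa [inv_inv] at h2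
      · have h1 : ‖G‖ * ‖Δ‖ < 1 / 4 := hcon.trans hc4
        have h2 := mul_inv_cancel₀ (ne_of_gt ha0)
        have h3 : 0 < ‖G‖⁻¹ := by positivity
        nlinarith
  obtain ⟨g, hgap, hg4⟩ := hgap_ex
  choose lam v hv1 hveq hvd using IPTAux.key ε Δ hgap hg4
  have hr0 : (0:ℝ) ≤ ‖Δ‖ := norm_nonneg _
  -- the eigenvalues are pairwise distinct
  have hlaminj : Function.Injective lam := by
    intro j k hjk
    by_contra hne
    have h1 := hvd j
    have h2 := hvd k
    have h3 := hgap j k hne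
    have h4 : ε j - ε k = (ε j - lam j) + (lam k - ε k) := by rw [hjk]; ring
    have h5 : ‖ε j - ε k‖ ≤ ‖ε j - lam j‖ + ‖lam k - ε k‖ := h4 ▸ norm_add_le _ _
    have h6 : ‖ε j - lam j‖ = ‖lam j - ε j‖ := norm_sub_rev _ _
    linarith
  -- each is a root of the characteristic polynomial
  have hroot : ∀ j, A.charpoly.IsRoot (lam j) := by
    intro j
    rw [Polynomial.IsRoot, IPTAux.eval_charpoly, ← Matrix.exists_mulVec_eq_zero_iff]
    refine ⟨v j, fun h0 => ?_, ?_⟩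
    · have := congrFun h0 j
      rw [hv1 j] at this
      simpa using this
    · rw [Matrix.sub_mulVec, hveq j]
      funext k
      simp [Matrix.mulVec_diagonal]
  -- contradiction with the multiplicity hypothesis
  have hpne : A.charpoly ≠ 0 := (Matrix.charpoly_monic A).ne_zero
  have hdeg : A.charpoly.natDegree = n := by
    simpa using Matrix.charpoly_natDegree_eq_dim A
  set T : Finset ℂ := Finset.image lam Finset.univ with hT
  have hTcard : T.card = n := by
    rw [hT, Finset.card_image_of_injective _ hlaminj, Finset.card_univ, Fintype.card_fin]
  have hq : (μ ::ₘ T.val) ≤ A.charpoly.roots := by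
    rw [Multiset.le_iff_count]
    intro a
    rw [Polynomial.count_roots]
    have hcount1 : T.val.count a ≤ 1 := Multiset.nodup_iff_count_le_one.mp T.nodup a
    by_cases ha : a = μ
    · subst ha
      rw [Multiset.count_cons_self]
      omega
    · rw [Multiset.count_cons_of_ne ha]
      by_cases haT : a ∈ T
      · obtain ⟨j, -, rfl⟩ := Finset.mem_image.mp haT
        have h1 : 0 < A.charpoly.rootMultiplicity (lam j) :=
          (Polynomial.rootMultiplicity_pos hpne).mpr (hroot j)
        omega
      · have : T.val.count a = 0 := Multiset.count_eq_zero.mpr haT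
        omega
  have hcard : n + 1 ≤ Multiset.card A.charpoly.roots := by
    have h1 := Multiset.card_le_card hq
    rw [Multiset.card_cons] at h1
    have h2 : Multiset.card T.val = n := hTcard
    omega
  have h2 := A.charpoly.card_roots'
  omega
end
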